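/- For all real ε with 0 < ε < 1/2, the strict inequality log₂(1 + (1−2ε)⁴) < (1 + log₂(ε² + (1−ε)²))² holds. -/

import Mathlib

open Real Set

private noncomputable def Gfun : ℝ → ℝ := fun x => Real.log (Real.log (1 + Real.exp x))

private lemma one_lt_aux (x : ℝ) : (1:ℝ) < 1 + Real.exp x := by
  nlinarith [Real.exp_pos x]

private lemma logpos_aux (x : ℝ) : 0 < Real.log (1 + Real.exp x) :=
  Real.log_pos (one_lt_aux x)

private lemma G_hasDeriv (x : ℝ) :
    HasDerivAt Gfun (Real.exp x / ((1 + Real.exp x) * Real.log (1 + Real.exp x))) x := by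
  have h1 : HasDerivAt (fun x : ℝ => 1 + Real.exp x) (Real.exp x) x :=
    (Real.hasDerivAt_exp x).const_add 1
  have hne : (1 : ℝ) + Real.exp x ≠ 0 := by nlinarith [Real.exp_pos x]
  have h2 := h1.log hne
  have h3 := h2.log (ne_of_gt (logpos_aux x))
  convert h3 using 1
  · rfl
  · rw [div_div]

private noncomputable def Wfun : ℝ → ℝ := fun u => (1 + u) * Real.log (1 + u) / u

private lemma W_hasDeriv (u : ℝ) (hu : 0 < u) :
    HasDerivAt Wfun ((u - Real.log (1 + u)) / u ^ 2) u := by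
  have hne : (1 : ℝ) + u ≠ 0 := by linarith
  have h1 : HasDerivAt (fun u : ℝ => 1 + u) 1 u := (hasDerivAt_id u).const_add 1
  have h2 := h1.log hne
  have h3 : HasDerivAt (fun u : ℝ => (1 + u) * Real.log (1 + u))
      (1 * Real.log (1 + u) + (1 + u) * (1 / (1 + u))) u := h1.mul h2
  have h4 := h3.div (hasDerivAt_id u) (ne_of_gt hu)
  convert h4 using 1
  case e'_8 => rfl
  case e'_9 =>
    simp only [id]
    rw [mul_one_div_cancel hne]
    ring
  all_goals rfl

private lemma W_mono' : StrictMonoOn Wfun (Set.Ioi (0:ℝ)) := by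
  apply strictMonoOn_of_deriv_pos (convex_Ioi 0)
  · intro u hu
    exact ((W_hasDeriv u hu).differentiableAt).continuousAt.continuousWithinAt
  · rw [interior_Ioi]
    intro u hu
    have hu' : (0:ℝ) < u := hu
    rw [(W_hasDeriv u hu').deriv]
    have hlog : Real.log (1 + u) < u := by
      have := Real.log_lt_sub_one_of_pos (x := 1 + u) (by linarith)
        (by intro h; nlinarith)
      linarith
    exact div_pos (by linarith) (by positivity)

private lemma psi_eq (u : ℝ) (hu : 0 < u) :
    u / ((1 + u) * Real.log (1 + u)) = 1 / Wfun u := by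
  rw [Wfun, one_div_div]

private lemma W_pos (u : ℝ) (hu : 0 < u) : 0 < Wfun u := by
  have : 0 < Real.log (1 + u) := Real.log_pos (by linarith)
  have : 0 < (1 + u) * Real.log (1 + u) := by nlinarith
  exact div_pos this hu

private lemma G_deriv_anti : StrictAnti (deriv Gfun) := by
  intro a b hab
  rw [(G_hasDeriv a).deriv, (G_hasDeriv b).deriv,
    psi_eq _ (Real.exp_pos a), psi_eq _ (Real.exp_pos b)]
  apply one_div_lt_one_div_of_lt (W_pos _ (Real.exp_pos a))
  exact W_mono' (Real.exp_pos a) (Real.exp_pos b) (Real.exp_lt_exp.2 hab)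

private lemma G_concave : StrictConcaveOn ℝ Set.univ Gfun := by
  apply StrictAnti.strictConcaveOn_univ_of_deriv _ G_deriv_anti
  exact (Differentiable.continuous (fun x => (G_hasDeriv x).differentiableAt))

private lemma key (y : ℝ) (hy0 : 0 < y) (hy1 : y < 1) :
    Real.log 2 * Real.log (1 + y ^ 2) < (Real.log (1 + y)) ^ 2 := by
  set x := Real.log y with hx
  have hex : Real.exp x = y := Real.exp_log hy0
  have hxneg : x < 0 := Real.log_neg hy0 hy1
  have hne : (2 * x : ℝ) ≠ (0 : ℝ) := by linarith
  have hmid := G_concave.2 (Set.mem_univ (2*x)) (Set.mem_univ (0:ℝ)) hne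
    (by norm_num : (0:ℝ) < 1/2) (by norm_num : (0:ℝ) < 1/2) (by norm_num)
  simp only [smul_eq_mul] at hmid
  have hptx : (1/2 : ℝ) * (2*x) + 1/2 * 0 = x := by ring
  rw [hptx] at hmid
  have he2x : Real.exp (2*x) = y ^ 2 := by
    rw [two_mul, Real.exp_add, hex]; ring
  have hG2x : Gfun (2*x) = Real.log (Real.log (1 + y^2)) := by rw [Gfun, he2x]
  have hG0 : Gfun 0 = Real.log (Real.log 2) := by
    simp [Gfun, Real.exp_zero]; norm_num
  have hGx : Gfun x = Real.log (Real.log (1 + y)) := by rw [Gfun, hex]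
  rw [hG2x, hG0, hGx] at hmid
  -- hmid : 1/2 * log (log (1+y²)) + 1/2 * log (log 2) < log (log (1+y))
  have hL : 0 < Real.log (1 + y) := Real.log_pos (by linarith)
  have hL2 : 0 < Real.log (1 + y^2) := Real.log_pos (by nlinarith)
  have hl2 : 0 < Real.log 2 := Real.log_pos (by norm_num)
  have hlt : Real.log (Real.log 2 * Real.log (1 + y^2)) < Real.log ((Real.log (1+y))^2) := by
    rw [Real.log_mul (ne_of_gt hl2) (ne_of_gt hL2), Real.log_pow]
    push_cast
    linarith
  exact (Real.log_lt_log_iff (by positivity) (by positivity)).1 hlt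

theorem stmt15 (ε : ℝ) (h0 : 0 < ε) (h1 : ε < 1 / 2) :
    Real.logb 2 (1 + (1 - 2 * ε) ^ 4) <
      (1 + Real.logb 2 (ε ^ 2 + (1 - ε) ^ 2)) ^ 2 := by
  set y : ℝ := (1 - 2*ε)^2 with hy
  have hy0 : 0 < y := by
    have : (0:ℝ) < 1 - 2*ε := by linarith
    positivity
  have hy1 : y < 1 := by nlinarith
  have h2 : ε ^ 2 + (1 - ε) ^ 2 = (1 + y)/2 := by rw [hy]; ring
  have h4 : 1 + (1 - 2*ε)^4 = 1 + y^2 := by rw [hy]; ring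
  have hlb : 1 + Real.logb 2 ((1 + y)/2) = Real.logb 2 (1 + y) := by
    rw [Real.logb_div (by linarith) (by norm_num), Real.logb_self_eq_one (by norm_num : (1:ℝ) < 2)]
    ring
  rw [h2, h4, hlb]
  have hkey := key y hy0 hy1
  have hl2 : 0 < Real.log 2 := Real.log_pos (by norm_num)
  rw [Real.logb, Real.logb, div_pow, div_lt_div_iff₀ hl2 (by positivity)]
  nlinarith [hl2, hkey]
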